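/- For every pca A there exists an ordinal α such that ∼_α equals ∼_{α+1} (and hence ∼_γ = ∼_α for all γ ≥ α). Moreover, the least such ordinal is either 0 or a limit ordinal. -/

import Mathlib

/-- A partial applicative structure: a set with a partial binary application. -/
structure PAS where
  carrier : Type
  app : carrier → carrier → Part carrier

namespace PAS

/-- Closed terms over a partial applicative structure. -/
inductive Term (A : PAS) : Type
  | const : A.carrier → Term A
  | app : Term A → Term A → Term A

/-- Evaluation of a closed term (a partial element of the carrier). -/
def Term.eval {A : PAS} : Term A → Part A.carrier
  | .const a => Part.some a
  | .app s t => do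
      let x ← Term.eval s
      let y ← Term.eval t
      A.app x y

/-- Kleene equality of closed terms: both undefined, or both defined and equal. -/
def KEq {A : PAS} (s t : Term A) : Prop := s.eval = t.eval

/-- The transfinite hierarchy of extensionality relations `∼_α` on closed terms:
`s ∼_0 t` iff `s ≃ t`; `s ∼_{α+1} t` iff `∀ x, s·x ∼_α t·x`; and at limits,
`s ∼_α t` iff `s ∼_β t` for some `β < α`. -/
noncomputable def sim (A : PAS) (α : Ordinal) : Term A → Term A → Prop :=
  Ordinal.limitRecOn α
    (fun s t => KEq s t)
    (fun _ ih s t => ∀ x : A.carrier, ih (s.app (.const x)) (t.app (.const x)))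
    (fun β _ ih s t => ∃ γ, ∃ h : γ < β, ih γ h s t)

end PAS

/-- A partial combinatory algebra: a partial applicative structure with
combinators `K` and `S` such that `K·a·b = a`, `S·a·b` is defined, and
`S·a·b·c ≃ a·c·(b·c)`. -/
structure PCA extends PAS where
  K : carrier
  S : carrier
  K_spec : ∀ a b : carrier, (app K a).bind (fun x => app x b) = Part.some a
  S_defined : ∀ a b : carrier, ((app S a).bind (fun x => app x b)).Dom
  S_spec : ∀ a b c : carrier,
    ((app S a).bind (fun x => app x b)).bind (fun x => app x c)
      = (app a c).bind (fun u => (app b c).bind (fun v => app u v))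

namespace PAS

variable {A : PAS}

theorem sim_zero (s t : Term A) : A.sim 0 s t ↔ KEq s t := by
  rw [sim, Ordinal.limitRecOn_zero]

theorem sim_succ (α : Ordinal) (s t : Term A) :
    A.sim (α + 1) s t ↔ ∀ x : A.carrier, A.sim α (s.app (.const x)) (t.app (.const x)) := by
  rw [sim, Ordinal.add_one_eq_succ, Ordinal.limitRecOn_succ]
  rfl

theorem sim_limit {α : Ordinal} (h : Order.IsSuccLimit α) (s t : Term A) :
    A.sim α s t ↔ ∃ γ < α, A.sim γ s t := by
  conv_lhs => rw [sim, Ordinal.limitRecOn_limit _ _ _ _ h]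
  simp only [sim, exists_prop]


theorem KEq.app_congr {s s' t t' : Term A} (h1 : KEq s s') (h2 : KEq t t') :
    KEq (s.app t) (s'.app t') := by
  simp only [KEq, Term.eval] at *
  rw [h1, h2]

theorem sim_congr : ∀ (α : Ordinal) {s s' t t' : Term A}, KEq s s' → KEq t t' →
    (A.sim α s t ↔ A.sim α s' t') := by
  intro α
  induction α using Ordinal.limitRecOn with
  | zero =>
    intro s s' t t' h1 h2
    rw [sim_zero, sim_zero]
    unfold KEq at *
    rw [h1, h2]
  | add_one β ih =>
    intro s s' t t' h1 h2
    rw [sim_succ, sim_succ]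
    exact forall_congr' fun x => ih (h1.app_congr rfl) (h2.app_congr rfl)
  | limit β hβ ih =>
    intro s s' t t' h1 h2
    rw [sim_limit hβ, sim_limit hβ]
    exact exists_congr fun γ => and_congr_right fun hγ => ih γ hγ h1 h2

theorem sim_app : ∀ (α : Ordinal) {s t : Term A}, A.sim α s t →
    ∀ x : A.carrier, A.sim α (s.app (.const x)) (t.app (.const x)) := by
  intro α
  induction α using Ordinal.limitRecOn with
  | zero =>
    intro s t h x
    rw [sim_zero] at *
    exact h.app_congr rfl
  | add_one β ih =>
    intro s t h x
    rw [sim_succ] at *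
    intro y
    exact ih (h x) y
  | limit β hβ ih =>
    intro s t h x
    rw [sim_limit hβ] at *
    obtain ⟨γ, hγ, h⟩ := h
    exact ⟨γ, hγ, ih γ hγ h x⟩

theorem sim_mono : ∀ (α β : Ordinal), β ≤ α → ∀ {s t : Term A}, A.sim β s t → A.sim α s t := by
  intro α
  induction α using Ordinal.induction with
  | h α ih =>
    intro β hβ s t h
    rcases eq_or_lt_of_le hβ with rfl | hlt
    · exact h
    rcases Ordinal.zero_or_succ_or_isSuccLimit α with rfl | ⟨γ, rfl⟩ | hl
    · exact absurd hlt (by simp : ¬β < 0)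
    · rw [← Ordinal.add_one_eq_succ] at *
      rw [sim_succ]
      intro x
      exact ih γ (by simp) β (Order.lt_add_one_iff.mp hlt) (sim_app β h x)
    · exact (sim_limit hl _ _).mpr ⟨β, hlt, h⟩

theorem sim_eq_of_between {α β : Ordinal} (hαβ : α < β)
    (hβ : A.sim α = A.sim β) : A.sim α = A.sim (α + 1) := by
  funext s t
  apply propext
  constructor
  · exact sim_mono (α + 1) α (le_of_lt (Order.lt_add_one_iff.mpr le_rfl)) -- fix
  · intro h
    rw [hβ]
    exact sim_mono β (α + 1) (Order.add_one_le_iff.mpr hαβ) h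

end PAS

namespace PCA

open PAS

variable (B : PCA)

/-- `K·s` as a term. -/
def Kt (s : Term B.toPAS) : Term B.toPAS := (Term.const B.K).app s

theorem keq_K (s : Term B.toPAS) (x : B.carrier) :
    KEq ((Kt B s).app (.const x)) s := by
  show Term.eval _ = _
  simp only [Kt, Term.eval, bind, Part.bind_some, Part.bind_assoc]
  simp [B.K_spec]

theorem sim_K_iff (α : Ordinal) (s t : Term B.toPAS) :
    B.toPAS.sim α s t ↔ B.toPAS.sim (α + 1) (Kt B s) (Kt B t) := by
  rw [sim_succ]
  constructor
  · intro h x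
    exact (sim_congr α (keq_K B s x) (keq_K B t x)).mpr h
  · intro h
    exact (sim_congr α (keq_K B s B.K) (keq_K B t B.K)).mp (h B.K)

universe u in
theorem exists_fixed : ∃ α : Ordinal.{u}, B.toPAS.sim α = B.toPAS.sim (α + 1) := by
  by_contra h
  push_neg at h
  apply not_injective_of_ordinal (fun α : Ordinal.{u} => B.toPAS.sim α)
  intro α β hab
  by_contra hne
  rcases Ne.lt_or_gt hne with hlt | hlt
  · exact h α (sim_eq_of_between hlt hab)
  · exact h β (sim_eq_of_between hlt hab.symm)

theorem tail {α : Ordinal} (hfix : B.toPAS.sim α = B.toPAS.sim (α + 1)) :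
    ∀ γ : Ordinal, α ≤ γ → B.toPAS.sim γ = B.toPAS.sim α := by
  intro γ
  induction γ using Ordinal.induction with
  | h γ ih =>
    intro hγ
    rcases eq_or_lt_of_le hγ with rfl | hlt
    · rfl
    rcases Ordinal.zero_or_succ_or_isSuccLimit γ with rfl | ⟨δ, rfl⟩ | hl
    · exact absurd hlt (by simp : ¬α < 0)
    · rw [← Ordinal.add_one_eq_succ] at *
      have hδ : α ≤ δ := Order.lt_add_one_iff.mp hlt
      have h1 : B.toPAS.sim δ = B.toPAS.sim α :=
        ih δ (Order.lt_add_one_iff.mpr le_rfl) hδ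
      funext s t
      apply propext
      rw [sim_succ, h1, ← sim_succ, ← hfix]
    · funext s t
      apply propext
      rw [sim_limit hl]
      constructor
      · rintro ⟨β, hβ, h⟩
        rcases le_or_gt β α with hle | hlt'
        · exact sim_mono α β hle h
        · rw [← ih β hβ (le_of_lt hlt')]; exact h
      · intro h
        exact ⟨α, hlt, h⟩

end PCA

/-- For every pca A there is an ordinal α with ∼_α = ∼_{α+1} (and then
∼_γ = ∼_α for all γ ≥ α); moreover the least such α is 0 or a limit ordinal. -/
theorem stmt5 (A : PCA) :
    (∃ α : Ordinal, A.toPAS.sim α = A.toPAS.sim (α + 1) ∧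
      ∀ γ : Ordinal, α ≤ γ → A.toPAS.sim γ = A.toPAS.sim α) ∧
    (∀ α : Ordinal, IsLeast {β : Ordinal | A.toPAS.sim β = A.toPAS.sim (β + 1)} α →
      α = 0 ∨ Order.IsSuccLimit α) := by
  constructor
  · obtain ⟨α, hα⟩ := PCA.exists_fixed A
    exact ⟨α, hα, PCA.tail A hα⟩
  · intro α ⟨hmem, hlb⟩
    rcases Ordinal.zero_or_succ_or_isSuccLimit α with rfl | ⟨β, rfl⟩ | hl
    · exact Or.inl rfl
    · exfalso
      rw [← Ordinal.add_one_eq_succ] at *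
      have hfixβ : A.toPAS.sim β = A.toPAS.sim (β + 1) := by
        funext s t
        apply propext
        constructor
        · exact PAS.sim_mono (β + 1) β (le_of_lt (Order.lt_add_one_iff.mpr le_rfl))
        · intro h
          have h2 := (PCA.sim_K_iff A (β + 1) s t).mp h
          rw [← hmem] at h2
          exact (PCA.sim_K_iff A β s t).mpr h2
      have := hlb hfixβ
      exact absurd (Order.lt_add_one_iff.mpr le_rfl) (not_lt_of_ge this)
    · exact Or.inr hl
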